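/- Let H be a real Hilbert space with a Hilbert basis (φ_i)_{i≥1}, let (λ_i)_{i≥1} be a nonincreasing sequence of nonnegative reals tending to 0, and let S be a bounded linear operator on H with S(φ_i) = √(λ_i) φ_i for all i. Let m ≥ 1 and c ≥ 1 be integers and ρ > 0, C > 0 reals, and suppose that for every integer n ≥ 1 there exists a bounded linear operator A_n on H whose range has dimension at most (c n)^m and such that ∑_{i≥1} ‖(S − A_n∘S)(φ_i)‖² ≤ C² n^{-ρ}. Then there exists C' > 0 such that λ_n ≤ C' n^{-(1 + ρ/m)} for every n ≥ 1. -/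

import Mathlib

open scoped ENNReal RealInnerProductSpace


set_option maxHeartbeats 1000000 in
lemma key6 {H : Type*} [NormedAddCommGroup H] [InnerProductSpace ℝ H] [CompleteSpace H]
    (b : HilbertBasis ℕ ℝ H) (lam : ℕ → ℝ) (hnonneg : ∀ i, 0 ≤ lam i) (hanti : Antitone lam)
    (S : H →L[ℝ] H) (hS : ∀ i, S (b i) = Real.sqrt (lam i) • b i)
    (A : H →L[ℝ] H) (r : ℕ)
    (hrank : Module.rank ℝ (LinearMap.range (A : H →ₗ[ℝ] H)) ≤ (r : Cardinal))
    (E : ℝ) (hE : 0 ≤ E)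
    (hsum : ∑' i, (‖(S - A ∘L S) (b i)‖₊ : ℝ≥0∞) ^ 2 ≤ ENNReal.ofReal E) :
    (r : ℝ) * lam (2 * r) ≤ E := by
  classical
  set W : Submodule ℝ H := LinearMap.range (A : H →ₗ[ℝ] H) with hW
  haveI : FiniteDimensional ℝ W := IsNoetherian.iff_fg.1
    (IsNoetherian.iff_rank_lt_aleph0.2 (hrank.trans_lt (Cardinal.nat_lt_aleph0 r)))
  have hfr : Module.finrank ℝ W ≤ r := Module.finrank_le_of_rank_le hrank
  set P := W.orthogonalProjectionOnto with hP
  set g : ℕ → ℝ := fun i => ‖(P (b i) : H)‖ ^ 2 with hg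
  -- Pythagoras
  have pyth : ∀ u : H, ‖u‖ ^ 2 = ‖u - (P u : H)‖ ^ 2 + ‖(P u : H)‖ ^ 2 := by
    intro u
    have hz : ⟪u - (P u : H), (P u : H)⟫ = 0 :=
      W.starProjection_inner_eq_zero u (P u : H) (P u).2
    have h := norm_add_sq_real (u - (P u : H)) (P u : H)
    rw [sub_add_cancel, hz] at h
    linarith
  -- minimality
  have hmin : ∀ (u w : H), w ∈ W → ‖u - (P u : H)‖ ^ 2 ≤ ‖u - w‖ ^ 2 := by
    intro u w hw
    have hz : ⟪u - (P u : H), (P u : H) - w⟫ = 0 :=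
      W.starProjection_inner_eq_zero u _ (Submodule.sub_mem W (P u).2 hw)
    have h := norm_add_sq_real (u - (P u : H)) ((P u : H) - w)
    rw [sub_add_sub_cancel, hz] at h
    nlinarith [sq_nonneg ‖(P u : H) - w‖]
  have hgdef : ∀ i, g i = ‖(P (b i) : H)‖ ^ 2 := fun i => rfl
  have hgle : ∀ i, g i ≤ 1 := by
    intro i
    have h := pyth (b i)
    have hb : ‖b i‖ = 1 := b.orthonormal.1 i
    rw [hb] at h
    rw [hgdef i]
    nlinarith [sq_nonneg ‖b i - (P (b i) : H)‖]
  -- step 1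
  have step1 : ∀ i, lam i * (1 - g i) ≤ ‖(S - A ∘L S) (b i)‖ ^ 2 := by
    intro i
    have hb : ‖b i‖ = 1 := b.orthonormal.1 i
    have happ : (S - A ∘L S) (b i) = S (b i) - A (S (b i)) := by
      simp [ContinuousLinearMap.sub_apply, ContinuousLinearMap.comp_apply]
    rw [happ]
    have h1 : ‖S (b i) - (P (S (b i)) : H)‖ ^ 2 ≤ ‖S (b i) - A (S (b i))‖ ^ 2 :=
      hmin _ _ (LinearMap.mem_range_self (A : H →ₗ[ℝ] H) (S (b i)))
    have h2 : ‖S (b i)‖ ^ 2 = lam i := by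
      rw [hS i, norm_smul, hb, Real.norm_eq_abs, abs_of_nonneg (Real.sqrt_nonneg _)]
      simp [Real.sq_sqrt (hnonneg i)]
    have h3 : ‖(P (S (b i)) : H)‖ ^ 2 = lam i * g i := by
      rw [hS i, map_smul]
      have : ((Real.sqrt (lam i) • P (b i) : W) : H) = Real.sqrt (lam i) • (P (b i) : H) := rfl
      rw [this, norm_smul, Real.norm_eq_abs, abs_of_nonneg (Real.sqrt_nonneg _), mul_pow,
        Real.sq_sqrt (hnonneg i), hgdef i]
    have h4 := pyth (S (b i))
    calc lam i * (1 - g i) = ‖S (b i)‖ ^ 2 - ‖(P (S (b i)) : H)‖ ^ 2 := by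
          rw [h2, h3]; ring
      _ = ‖S (b i) - (P (S (b i)) : H)‖ ^ 2 := by linarith
      _ ≤ _ := h1
  -- step 2 : Bessel
  have step2 : ∑ i ∈ Finset.range (2 * r), g i ≤ (r : ℝ) := by
    set d := stdOrthonormalBasis ℝ W with hd
    have hgi : ∀ i, g i = ∑ j, ⟪((d j : W) : H), b i⟫ ^ 2 := by
      intro i
      have h := d.sum_inner_mul_inner (P (b i)) (P (b i))
      have hinn : ∀ j, ⟪(d j : W), P (b i)⟫ = ⟪((d j : W) : H), b i⟫ := fun j =>
        Submodule.inner_orthogonalProjectionOnto_eq_of_mem_left (K := W) (d j) (b i)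
      have e1 : g i = ⟪P (b i), P (b i)⟫ := by
        rw [hgdef i, real_inner_self_eq_norm_sq]; rfl
      rw [e1, ← h]
      refine Finset.sum_congr rfl fun j _ => ?_
      rw [real_inner_comm ((d j : W)) (P (b i)), hinn j, sq]
    have hswap : ∑ i ∈ Finset.range (2 * r), g i
        = ∑ j, ∑ i ∈ Finset.range (2 * r), ⟪((d j : W) : H), b i⟫ ^ 2 := by
      simp_rw [hgi]
      exact Finset.sum_comm
    rw [hswap]
    have hj : ∀ j, ∑ i ∈ Finset.range (2 * r), ⟪((d j : W) : H), b i⟫ ^ 2 ≤ 1 := by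
      intro j
      have hs : HasSum (fun i => ⟪((d j : W) : H), b i⟫ * ⟪b i, ((d j : W) : H)⟫)
          ⟪((d j : W) : H), ((d j : W) : H)⟫ := b.hasSum_inner_mul_inner _ _
      have heq : (fun i => ⟪((d j : W) : H), b i⟫ * ⟪b i, ((d j : W) : H)⟫)
          = fun i => ⟪((d j : W) : H), b i⟫ ^ 2 := by
        funext i; rw [real_inner_comm ((d j : W) : H) (b i), sq]
      rw [heq] at hs
      have hval : ⟪((d j : W) : H), ((d j : W) : H)⟫ = 1 := by
        rw [real_inner_self_eq_norm_sq]
        have : ‖(d j : W)‖ = 1 := d.orthonormal.1 j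
        rw [show ‖((d j : W) : H)‖ = ‖(d j : W)‖ from rfl, this]; norm_num
      calc ∑ i ∈ Finset.range (2 * r), ⟪((d j : W) : H), b i⟫ ^ 2
          ≤ ⟪((d j : W) : H), ((d j : W) : H)⟫ :=
            sum_le_hasSum _ (fun i _ => sq_nonneg _) hs
        _ = 1 := hval
    calc ∑ j, ∑ i ∈ Finset.range (2 * r), ⟪((d j : W) : H), b i⟫ ^ 2
        ≤ ∑ _j : Fin (Module.finrank ℝ W), (1 : ℝ) := Finset.sum_le_sum (fun j _ => hj j)
      _ = (Module.finrank ℝ W : ℝ) := by simp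
      _ ≤ (r : ℝ) := by exact_mod_cast hfr
  -- step 3
  have step3 : ∑ i ∈ Finset.range (2 * r), ‖(S - A ∘L S) (b i)‖ ^ 2 ≤ E := by
    have h1 : ∑ i ∈ Finset.range (2 * r), (‖(S - A ∘L S) (b i)‖₊ : ℝ≥0∞) ^ 2
        ≤ ENNReal.ofReal E := le_trans (ENNReal.sum_le_tsum _) hsum
    have h2 : ∑ i ∈ Finset.range (2 * r), (‖(S - A ∘L S) (b i)‖₊ : ℝ≥0∞) ^ 2
        = ENNReal.ofReal (∑ i ∈ Finset.range (2 * r), ‖(S - A ∘L S) (b i)‖ ^ 2) := by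
      rw [ENNReal.ofReal_sum_of_nonneg (fun i _ => sq_nonneg _)]
      congr 1; funext i
      rw [ENNReal.ofReal_pow (norm_nonneg _), ofReal_norm, enorm_eq_nnnorm]
    rw [h2] at h1
    exact (ENNReal.ofReal_le_ofReal_iff hE).mp h1
  -- combine
  have hl2r : 0 ≤ lam (2 * r) := hnonneg _
  calc (r : ℝ) * lam (2 * r)
      ≤ lam (2 * r) * (2 * r - ∑ i ∈ Finset.range (2 * r), g i) := by
        have : (r : ℝ) ≤ 2 * r - ∑ i ∈ Finset.range (2 * r), g i := by
          have := step2; push_cast; linarith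
        nlinarith
    _ = ∑ i ∈ Finset.range (2 * r), lam (2 * r) * (1 - g i) := by
        rw [← Finset.mul_sum, Finset.sum_sub_distrib]
        simp [mul_comm]
    _ ≤ ∑ i ∈ Finset.range (2 * r), lam i * (1 - g i) := by
        refine Finset.sum_le_sum fun i hi => ?_
        have hi' : i ≤ 2 * r := le_of_lt (Finset.mem_range.mp hi)
        exact mul_le_mul_of_nonneg_right (hanti hi') (by linarith [hgle i])
    _ ≤ ∑ i ∈ Finset.range (2 * r), ‖(S - A ∘L S) (b i)‖ ^ 2 :=
        Finset.sum_le_sum fun i _ => step1 i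
    _ ≤ E := step3


-- numeric glue lemma
set_option maxHeartbeats 2000000 in
lemma num6 (lam : ℕ → ℝ) (hnonneg : ∀ i, 0 ≤ lam i) (hanti : Antitone lam)
    (m c : ℕ) (hm : 1 ≤ m) (hc : 1 ≤ c) (ρ C : ℝ) (hρ : 0 < ρ) (hC : 0 < C)
    (hkey : ∀ n : ℕ, 1 ≤ n → (((c * n) ^ m : ℕ) : ℝ) * lam (2 * (c * n) ^ m)
      ≤ C ^ 2 * (n : ℝ) ^ (-ρ)) :
    ∃ C' : ℝ, 0 < C' ∧ ∀ n : ℕ, 1 ≤ n →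
      lam n ≤ C' * (n : ℝ) ^ (-(1 + ρ / (m : ℝ))) := by
  have hm0 : (0:ℝ) < m := by exact_mod_cast hm
  have hc0 : (0:ℝ) < c := by exact_mod_cast hc
  set q : ℝ := 1 + ρ / m with hq
  have hq0 : 0 < q := by have : 0 < ρ / m := div_pos hρ hm0; simp [hq]; linarith
  set X : ℝ := (4 * (c:ℝ)) ^ (m:ℕ) with hX
  have h4c : (0:ℝ) < 4 * c := by linarith
  have hX0 : 0 < X := by positivity
  set B1 : ℝ := C ^ 2 * (4 * (c:ℝ)) ^ (ρ + (m:ℝ)) with hB1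
  have hB10 : 0 < B1 := by positivity
  set B2 : ℝ := lam 0 * X ^ q with hB2
  have hB20 : 0 ≤ B2 := mul_nonneg (hnonneg 0) (Real.rpow_nonneg hX0.le _)
  refine ⟨B1 + B2, by linarith, ?_⟩
  intro N hN
  have hN0 : (0:ℝ) < N := by exact_mod_cast hN
  have hNq : (0:ℝ) < (N:ℝ) ^ (-q) := Real.rpow_pos_of_pos hN0 _
  rcases le_or_gt (N:ℝ) X with hcase | hcase
  · -- small N
    have h1 : (N:ℝ) ^ q ≤ X ^ q := Real.rpow_le_rpow hN0.le hcase hq0.le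
    have h2 : 1 ≤ X ^ q * (N:ℝ) ^ (-q) := by
      rw [Real.rpow_neg hN0.le, ← div_eq_mul_inv]
      exact (one_le_div (Real.rpow_pos_of_pos hN0 _)).mpr h1
    have h3 : lam N ≤ lam 0 := hanti (Nat.zero_le N)
    have h4 : lam 0 ≤ B2 * (N:ℝ) ^ (-q) := by
      rw [hB2, mul_assoc]
      nlinarith [hnonneg 0]
    have h5 : 0 ≤ B1 * (N:ℝ) ^ (-q) := by positivity
    nlinarith
  · -- large N
    set x : ℝ := (N:ℝ) ^ (1 / (m:ℝ)) with hx
    have hx0 : 0 < x := Real.rpow_pos_of_pos hN0 _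
    have hxm : x ^ (m:ℕ) = (N:ℝ) := by
      rw [hx, ← Real.rpow_natCast ((N:ℝ) ^ (1/(m:ℝ))) m, ← Real.rpow_mul hN0.le,
        one_div_mul_cancel hm0.ne', Real.rpow_one]
    have hx4c : 4 * (c:ℝ) ≤ x := by
      have h1 : X ^ (1/(m:ℝ)) ≤ (N:ℝ) ^ (1/(m:ℝ)) :=
        Real.rpow_le_rpow hX0.le hcase.le (by positivity)
      have h2 : X ^ (1/(m:ℝ)) = 4 * (c:ℝ) := by
        rw [hX, ← Real.rpow_natCast (4*(c:ℝ)) m, ← Real.rpow_mul h4c.le,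
          mul_one_div_cancel hm0.ne', Real.rpow_one]
      rw [← h2]; exact h1
    set n : ℕ := ⌊x / (2 * c)⌋₊ with hn
    have h2c : (0:ℝ) < 2 * c := by linarith
    have hxd : 2 ≤ x / (2 * c) := by
      rw [le_div_iff₀ h2c]; linarith
    have hn1 : 1 ≤ n := Nat.le_floor (by push_cast; linarith)
    have hnle : (n:ℝ) ≤ x / (2 * c) := Nat.floor_le (by positivity)
    have hnge : x / (4 * c) ≤ (n:ℝ) := by
      have h1 := Nat.sub_one_lt_floor (x / (2 * c))
      have h2 : x / (2 * c) = 2 * (x / (4 * c)) := by field_simp; ring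
      have h3 : 1 ≤ x / (4 * c) := by
        rw [le_div_iff₀ h4c]; linarith
      rw [← hn] at h1
      linarith
    have hnpos : (0:ℝ) < n := by exact_mod_cast hn1
    -- 2 (c n)^m ≤ N
    have hcnx : (c:ℝ) * n ≤ x / 2 := by
      have := mul_le_mul_of_nonneg_left hnle hc0.le
      calc (c:ℝ) * n ≤ c * (x / (2 * c)) := this
        _ = x / 2 := by field_simp
    have hpowle : ((c:ℝ) * n) ^ (m:ℕ) ≤ (x / 2) ^ (m:ℕ) :=
      pow_le_pow_left₀ (by positivity) hcnx m
    have h2m : (2:ℝ) ≤ 2 ^ (m:ℕ) := by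
      calc (2:ℝ) = 2 ^ 1 := (pow_one 2).symm
        _ ≤ 2 ^ (m:ℕ) := pow_le_pow_right₀ (by norm_num) hm
    have hhalf : (x / 2) ^ (m:ℕ) ≤ (N:ℝ) / 2 := by
      rw [div_pow, hxm]
      rw [div_le_div_iff₀ (by positivity) (by norm_num)]
      nlinarith
    have h2N : (2 * (c * n) ^ m : ℕ) ≤ N := by
      have hreal : ((2 * (c * n) ^ m : ℕ) : ℝ) ≤ (N:ℝ) := by
        push_cast
        calc (2:ℝ) * ((c:ℝ) * n) ^ (m:ℕ) ≤ 2 * ((N:ℝ)/2) := by nlinarith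
          _ = N := by ring
      exact_mod_cast hreal
    have hlamN : lam N ≤ lam (2 * (c * n) ^ m) := hanti h2N
    have hkn := hkey n hn1
    have hcnm : (0:ℝ) < ((c:ℝ) * n) ^ (m:ℕ) := by positivity
    have hcast : (((c * n) ^ m : ℕ) : ℝ) = ((c:ℝ) * n) ^ (m:ℕ) := by push_cast; ring
    have hlam2 : lam (2 * (c * n) ^ m) ≤ C ^ 2 * (n:ℝ) ^ (-ρ) / ((c:ℝ) * n) ^ (m:ℕ) := by
      rw [le_div_iff₀ hcnm]
      calc lam (2 * (c * n) ^ m) * ((c:ℝ) * n) ^ (m:ℕ)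
          = (((c * n) ^ m : ℕ) : ℝ) * lam (2 * (c * n) ^ m) := by rw [hcast]; ring
        _ ≤ _ := hkn
    -- (c n)^m ≥ n^m
    have hnm : ((n:ℝ)) ^ (m:ℕ) ≤ ((c:ℝ) * n) ^ (m:ℕ) := by
      apply pow_le_pow_left₀ (by positivity)
      have h := mul_le_mul_of_nonneg_right (show (1:ℝ) ≤ c by exact_mod_cast hc) hnpos.le
      linarith
    have hstep : C ^ 2 * (n:ℝ) ^ (-ρ) / ((c:ℝ) * n) ^ (m:ℕ)
        ≤ C ^ 2 * (n:ℝ) ^ (-ρ) / (n:ℝ) ^ (m:ℕ) := by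
      apply div_le_div_of_nonneg_left (by positivity) (by positivity) hnm
    have hmerge : C ^ 2 * (n:ℝ) ^ (-ρ) / (n:ℝ) ^ (m:ℕ) = C ^ 2 * (n:ℝ) ^ (-(ρ + m)) := by
      rw [← Real.rpow_natCast (n:ℝ) m, mul_div_assoc, ← Real.rpow_sub hnpos]
      ring_nf
    have hrx : (n:ℝ) ^ (-(ρ + m)) ≤ (x / (4 * c)) ^ (-(ρ + m)) :=
      Real.rpow_le_rpow_of_nonpos (by positivity) hnge (by linarith)
    have hexp : x ^ (-(ρ + (m:ℝ))) = (N:ℝ) ^ (-q) := by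
      rw [hx, ← Real.rpow_mul hN0.le]
      congr 1
      rw [hq]
      field_simp
      ring
    have hfin : (x / (4 * c)) ^ (-(ρ + (m:ℝ)))
        = (4 * (c:ℝ)) ^ (ρ + (m:ℝ)) * (N:ℝ) ^ (-q) := by
      rw [Real.div_rpow hx0.le h4c.le, hexp, Real.rpow_neg h4c.le, div_inv_eq_mul _ _, mul_comm]
    calc lam N ≤ lam (2 * (c * n) ^ m) := hlamN
      _ ≤ C ^ 2 * (n:ℝ) ^ (-ρ) / ((c:ℝ) * n) ^ (m:ℕ) := hlam2
      _ ≤ C ^ 2 * (n:ℝ) ^ (-ρ) / (n:ℝ) ^ (m:ℕ) := hstep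
      _ = C ^ 2 * (n:ℝ) ^ (-(ρ + (m:ℝ))) := hmerge
      _ ≤ C ^ 2 * (x / (4 * c)) ^ (-(ρ + (m:ℝ))) :=
          mul_le_mul_of_nonneg_left hrx (by positivity)
      _ = B1 * (N:ℝ) ^ (-q) := by rw [hfin, hB1]; ring
      _ ≤ (B1 + B2) * (N:ℝ) ^ (-q) := by nlinarith

/-- Let `(φ_i)` be a Hilbert basis of the real Hilbert space `H`, `(λ_i)` a
nonincreasing sequence of nonnegative reals tending to `0`, and `S` a bounded operator with
`S φ_i = √λ_i φ_i`.  If for every `n ≥ 1` there is a bounded operator `A_n` whose range has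
dimension at most `(c n)^m` with `∑_i ‖(S - A_n ∘ S)(φ_i)‖² ≤ C² n^{-ρ}`, then
`λ_n ≤ C' n^{-(1+ρ/m)}` for all `n ≥ 1` and some `C' > 0`. -/
theorem statement6 {H : Type*} [NormedAddCommGroup H] [InnerProductSpace ℝ H]
    [CompleteSpace H] (b : HilbertBasis ℕ ℝ H)
    (lam : ℕ → ℝ) (hnonneg : ∀ i, 0 ≤ lam i) (hanti : Antitone lam)
    (hlim : Filter.Tendsto lam Filter.atTop (nhds 0))
    (S : H →L[ℝ] H) (hS : ∀ i, S (b i) = Real.sqrt (lam i) • b i)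
    (m c : ℕ) (hm : 1 ≤ m) (hc : 1 ≤ c) (ρ C : ℝ) (hρ : 0 < ρ) (hC : 0 < C)
    (hA : ∀ n : ℕ, 1 ≤ n → ∃ A : H →L[ℝ] H,
      Module.rank ℝ (LinearMap.range (A : H →ₗ[ℝ] H)) ≤ (((c * n) ^ m : ℕ) : Cardinal) ∧
      ∑' i, (‖(S - A ∘L S) (b i)‖₊ : ℝ≥0∞) ^ 2 ≤
        ENNReal.ofReal (C ^ 2 * (n : ℝ) ^ (-ρ))) :
    ∃ C' : ℝ, 0 < C' ∧ ∀ n : ℕ, 1 ≤ n →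
      lam n ≤ C' * (n : ℝ) ^ (-(1 + ρ / (m : ℝ))) := by
  have hkey : ∀ n : ℕ, 1 ≤ n → (((c * n) ^ m : ℕ) : ℝ) * lam (2 * (c * n) ^ m)
      ≤ C ^ 2 * (n : ℝ) ^ (-ρ) := by
    intro n hn
    obtain ⟨A, hrank, hsum⟩ := hA n hn
    exact key6 b lam hnonneg hanti S hS A ((c * n) ^ m) hrank _ (by positivity) hsum
  exact num6 lam hnonneg hanti m c hm hc ρ C hρ hC hkey
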